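/- Let τ > 0 and s ∈ ℕ. There exists a constant C > 0, depending only on s and τ, with the following property: for every γ > 0, every α ∈ ℝ with |kα|_ℤ ≥ γ⁻¹|k|^{−τ} for all nonzero integers k, every integer N ≥ 1, and every trigonometric polynomial f(x) = Σ_{0<|k|≤N} c_k e^{2πikx}, there exists a trigonometric polynomial Y(x) = Σ_{0<|k|≤N} d_k e^{2πikx} such that Y(x+α) − Y(x) = f(x) for all x ∈ ℝ, and ‖Y‖_{C^s} ≤ C γ N^{s+τ+1} sup_{x∈ℝ} |f(x)|. -/

import Mathlib

/-- The distance from a real number to the nearest integer, `|t|_ℤ`. -/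
noncomputable def distInt (t : ℝ) : ℝ := |t - round t|

/-- The trigonometric polynomial with spectrum in the finite set `S` and coefficients `c`. -/
noncomputable def trig (S : Finset ℤ) (c : ℤ → ℂ) (x : ℝ) : ℂ :=
  ∑ k ∈ S, c k * Complex.exp (2 * Real.pi * Complex.I * k * x)

section Aux

open Complex Real

lemma hasDerivAt_cexp_mul (a : ℂ) (x : ℝ) :
    HasDerivAt (fun y : ℝ => Complex.exp (a * y)) (a * Complex.exp (a * x)) x := by
  have h1 : HasDerivAt (fun y : ℝ => (y : ℂ)) 1 x := by
    simpa using (hasDerivAt_id x).ofReal_comp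
  simpa [mul_comm] using (h1.const_mul a).cexp

lemma hasDerivAt_trig (S : Finset ℤ) (c : ℤ → ℂ) (x : ℝ) :
    HasDerivAt (trig S c) (trig S (fun k => 2 * Real.pi * Complex.I * k * c k) x) x := by
  unfold trig
  refine HasDerivAt.fun_sum fun k _ => ?_
  have h := ((hasDerivAt_cexp_mul (2 * Real.pi * Complex.I * k) x).const_mul (c k))
  have he : c k * (2 * Real.pi * Complex.I * k * Complex.exp (2 * Real.pi * Complex.I * k * x))
      = 2 * Real.pi * Complex.I * k * c k * Complex.exp (2 * Real.pi * Complex.I * k * x) := by ring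
  rw [he] at h
  simpa [mul_assoc] using h

lemma iteratedDeriv_trig (S : Finset ℤ) (c : ℤ → ℂ) (σ : ℕ) :
    iteratedDeriv σ (trig S c) = trig S (fun k => (2 * Real.pi * Complex.I * k) ^ σ * c k) := by
  induction σ with
  | zero => simp [iteratedDeriv_zero]
  | succ n ih =>
    rw [iteratedDeriv_succ, ih]
    funext x
    rw [(hasDerivAt_trig S _ x).deriv]
    unfold trig
    refine Finset.sum_congr rfl fun k _ => by ring

lemma integral_exp_int (m : ℤ) :
    (∫ x in (0:ℝ)..1, Complex.exp (2 * Real.pi * Complex.I * m * x)) =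
      if m = 0 then 1 else 0 := by
  rcases eq_or_ne m 0 with h | h
  · simp [h]
  · rw [if_neg h]
    have hc : (2 * (Real.pi:ℂ) * Complex.I * m) ≠ 0 := by
      simp [Real.pi_ne_zero, Complex.I_ne_zero, h]
    have := integral_exp_mul_complex (a := (0:ℝ)) (b := 1) hc
    simp only [mul_assoc] at this ⊢
    rw [this]
    have h1 : (2 * ((Real.pi:ℂ) * (Complex.I * ((m:ℂ) * ((1:ℝ):ℂ))))) = m * (2 * Real.pi * Complex.I) := by
      push_cast; ring
    rw [h1, Complex.exp_int_mul_two_pi_mul_I]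
    simp

lemma norm_exp_I_real (t : ℝ) (k : ℤ) : ‖Complex.exp (2 * Real.pi * Complex.I * k * t)‖ = 1 := by
  rw [Complex.norm_exp]
  have : (2 * (Real.pi:ℂ) * Complex.I * k * t).re = 0 := by simp
  simp [this]

lemma coeff_eq (S : Finset ℤ) (c : ℤ → ℂ) (k : ℤ) (hk : k ∈ S) :
    c k = ∫ x in (0:ℝ)..1, trig S c x * Complex.exp (2 * Real.pi * Complex.I * (-k) * x) := by
  have heq : ∀ x : ℝ, trig S c x * Complex.exp (2 * Real.pi * Complex.I * (-k) * x)
      = ∑ j ∈ S, c j * Complex.exp (2 * Real.pi * Complex.I * (j - k) * x) := by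
    intro x
    unfold trig
    rw [Finset.sum_mul]
    refine Finset.sum_congr rfl fun j _ => ?_
    rw [mul_assoc, ← Complex.exp_add]
    congr 2
    ring
  simp_rw [heq]
  rw [intervalIntegral.integral_finset_sum]
  · have key : ∀ j ∈ S, (∫ x in (0:ℝ)..1, c j * Complex.exp (2 * Real.pi * Complex.I * (j - k) * x))
        = if j = k then c j else 0 := by
      intro j _
      rw [intervalIntegral.integral_const_mul]
      have h2 : ((j:ℂ) - k) = ((j - k : ℤ) : ℂ) := by push_cast; ring
      rw [h2, integral_exp_int]
      by_cases h : j = k <;> simp [h, sub_eq_zero]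
    rw [Finset.sum_congr rfl key, Finset.sum_ite_eq' S k]
    simp [hk]
  · intro j _
    exact (Continuous.intervalIntegrable (by
      exact continuous_const.mul (Complex.continuous_exp.comp (by continuity))) _ _)

lemma norm_exp_two_pi_sub_one (t : ℝ) :
    4 * distInt t ≤ ‖Complex.exp (2 * Real.pi * Complex.I * t) - 1‖ := by
  set u : ℝ := t - round t with hu
  have habs : |u| ≤ 1/2 := by rw [hu]; exact abs_sub_round t
  have hexp : Complex.exp (2 * Real.pi * Complex.I * t) = Complex.exp (((2 * Real.pi * u : ℝ)) * Complex.I) := by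
    have : (2 * (Real.pi:ℂ) * Complex.I * t) = ((2 * Real.pi * u : ℝ) : ℂ) * Complex.I + (round t : ℤ) * (2 * Real.pi * Complex.I) := by
      push_cast [hu]; ring
    rw [this, Complex.exp_add, Complex.exp_int_mul_two_pi_mul_I, mul_one]
  have hr : (2:ℝ) * Real.pi * u = 2 * (Real.pi * u) := by ring
  have hre : (Complex.exp (((2 * Real.pi * u : ℝ):ℂ) * Complex.I) - 1).re = Real.cos (2 * Real.pi * u) - 1 := by
    rw [Complex.sub_re, Complex.exp_ofReal_mul_I_re, Complex.one_re]
  have him : (Complex.exp (((2 * Real.pi * u : ℝ):ℂ) * Complex.I) - 1).im = Real.sin (2 * Real.pi * u) := by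
    rw [Complex.sub_im, Complex.exp_ofReal_mul_I_im, Complex.one_im, sub_zero]
  have hnorm : ‖Complex.exp (((2 * Real.pi * u : ℝ):ℂ) * Complex.I) - 1‖
      = Real.sqrt ((Real.cos (2 * Real.pi * u) - 1)^2 + (Real.sin (2 * Real.pi * u))^2) := by
    rw [Complex.norm_def, Complex.normSq_apply, hre, him]
    ring_nf
  have hsq : (Real.cos (2 * Real.pi * u) - 1)^2 + (Real.sin (2 * Real.pi * u))^2 = 4 * (Real.sin (Real.pi * u))^2 := by
    have h1 := Real.cos_sq (Real.pi * u)
    have h2 := Real.sin_sq_add_cos_sq (Real.pi * u)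
    have h3 := Real.sin_sq_add_cos_sq (2 * (Real.pi * u))
    rw [hr]
    linear_combination h3 + 4 * h1 - 4 * h2
  have hsqrt : Real.sqrt ((Real.cos (2 * Real.pi * u) - 1)^2 + (Real.sin (2 * Real.pi * u))^2) = 2 * |Real.sin (Real.pi * u)| := by
    rw [hsq]
    rw [show (4 : ℝ) * Real.sin (Real.pi * u) ^ 2 = (2 * |Real.sin (Real.pi * u)|)^2 by
      rw [mul_pow, _root_.sq_abs]; norm_num]
    exact Real.sqrt_sq (by positivity)
  have hjordan : 2 * |u| ≤ |Real.sin (Real.pi * u)| := by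
    have hpos := Real.pi_pos
    have h0 : (0:ℝ) ≤ Real.pi * |u| := by positivity
    have h1 : Real.pi * |u| ≤ Real.pi / 2 := by nlinarith [abs_nonneg u]
    have := Real.mul_le_sin h0 h1
    have heq : |Real.sin (Real.pi * u)| = Real.sin (Real.pi * |u|) := by
      rcases abs_cases u with ⟨h, _⟩ | ⟨h, _⟩
      · rw [h]
        exact abs_of_nonneg (Real.sin_nonneg_of_nonneg_of_le_pi (by positivity) (by nlinarith))
      · have hnn : 0 ≤ -Real.sin (Real.pi * u) := by
          rw [← Real.sin_neg, ← mul_neg, ← h]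
          exact Real.sin_nonneg_of_nonneg_of_le_pi (by positivity) (by nlinarith [abs_nonneg u])
        rw [h, mul_neg, Real.sin_neg, abs_of_nonpos (by linarith)]
    rw [heq]
    calc 2 * |u| = 2 / Real.pi * (Real.pi * |u|) := by field_simp
    _ ≤ Real.sin (Real.pi * |u|) := this
  rw [hexp, hnorm, hsqrt]
  unfold distInt
  rw [← hu]
  nlinarith [hjordan]

end Aux

/-- For `τ > 0` and `s ∈ ℕ` there is `C > 0` such that for every `γ > 0`, every
`α ∈ DC(γ,τ)`, every `N ≥ 1` and every trigonometric polynomial `f` with spectrum in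
`{k : 0 < |k| ≤ N}`, the cohomological equation `Y(·+α) − Y = f` has a trigonometric polynomial
solution with the same spectrum and `‖Y‖_{C^s} ≤ C γ N^{s+τ+1} sup |f|`. -/
theorem stmt11 (τ : ℝ) (hτ : 0 < τ) (s : ℕ) :
    ∃ C : ℝ, 0 < C ∧
      ∀ γ : ℝ, 0 < γ →
      ∀ α : ℝ, (∀ k : ℤ, k ≠ 0 → γ⁻¹ * |(k : ℝ)| ^ (-τ) ≤ distInt (k * α)) →
      ∀ N : ℕ, 1 ≤ N →
      ∀ c : ℤ → ℂ,
        ∃ d : ℤ → ℂ,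
          (∀ x : ℝ,
              trig ((Finset.Icc (-(N : ℤ)) N).erase 0) d (x + α) -
                  trig ((Finset.Icc (-(N : ℤ)) N).erase 0) d x =
                trig ((Finset.Icc (-(N : ℤ)) N).erase 0) c x) ∧
          ∀ σ : ℕ, σ ≤ s → ∀ x : ℝ,
            ‖iteratedDeriv σ (trig ((Finset.Icc (-(N : ℤ)) N).erase 0) d) x‖ ≤
              C * γ * (N : ℝ) ^ ((s : ℝ) + τ + 1) *
                ⨆ y : ℝ, ‖trig ((Finset.Icc (-(N : ℤ)) N).erase 0) c y‖ := by
  refine ⟨(2 * Real.pi) ^ s, by positivity, fun γ hγ α hα N hN c => ?_⟩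
  set S : Finset ℤ := (Finset.Icc (-(N : ℤ)) N).erase 0 with hS
  set M : ℝ := ⨆ y : ℝ, ‖trig S c y‖ with hMdef
  have hπ := Real.pi_pos
  have hNpos : (0:ℝ) < N := by exact_mod_cast hN
  have hN1 : (1:ℝ) ≤ N := by exact_mod_cast hN
  -- bounded above
  have hbdd : BddAbove (Set.range fun y : ℝ => ‖trig S c y‖) := by
    refine ⟨∑ k ∈ S, ‖c k‖, ?_⟩
    rintro _ ⟨y, rfl⟩
    refine (norm_sum_le _ _).trans ?_
    refine Finset.sum_le_sum fun k _ => ?_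
    rw [norm_mul, norm_exp_I_real]
    simp
  have hM : ∀ x : ℝ, ‖trig S c x‖ ≤ M := fun x => le_ciSup hbdd x
  have hM0 : 0 ≤ M := le_trans (norm_nonneg _) (hM 0)
  -- coefficient bound
  have hc : ∀ k ∈ S, ‖c k‖ ≤ M := by
    intro k hk
    rw [coeff_eq S c k hk]
    have := intervalIntegral.norm_integral_le_of_norm_le_const
      (a := (0:ℝ)) (b := 1) (C := M)
      (f := fun x => trig S c x * Complex.exp (2 * Real.pi * Complex.I * (-k) * x))
      (fun x _ => by
        have h1 : ‖Complex.exp (2 * Real.pi * Complex.I * (-k) * x)‖ = 1 := by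
          have := norm_exp_I_real x (-k)
          push_cast at this ⊢
          exact this
        rw [norm_mul]
        push_cast at h1 ⊢
        rw [h1, mul_one]
        exact hM x)
    simpa using this
  -- denominator bound
  have hE : ∀ k ∈ S, 4 * (γ⁻¹ * |(k:ℝ)| ^ (-τ)) ≤ ‖Complex.exp (2 * Real.pi * Complex.I * k * α) - 1‖ := by
    intro k hk
    have hk0 : k ≠ 0 := Finset.ne_of_mem_erase hk
    have h1 := norm_exp_two_pi_sub_one ((k : ℝ) * α)
    have harg : (2 * (Real.pi:ℂ) * Complex.I * (((k:ℝ) * α : ℝ) : ℂ)) = 2 * Real.pi * Complex.I * k * α := by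
      push_cast; ring
    rw [harg] at h1
    refine le_trans ?_ h1
    have := hα k hk0
    unfold distInt at *
    nlinarith [abs_nonneg (((k:ℝ)) * α - round ((k:ℝ) * α))]
  have hEpos : ∀ k ∈ S, (0:ℝ) < 4 * (γ⁻¹ * |(k:ℝ)| ^ (-τ)) := by
    intro k hk
    have hk0 : k ≠ 0 := Finset.ne_of_mem_erase hk
    have : (0:ℝ) < |(k:ℝ)| := by
      simp only [abs_pos]
      exact_mod_cast hk0
    positivity
  have hEne : ∀ k ∈ S, Complex.exp (2 * Real.pi * Complex.I * k * α) - 1 ≠ 0 := by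
    intro k hk
    intro h
    have := lt_of_lt_of_le (hEpos k hk) (hE k hk)
    rw [h] at this
    simp at this
  -- definition of d
  set d : ℤ → ℂ := fun k => if k = 0 then 0 else c k / (Complex.exp (2 * Real.pi * Complex.I * k * α) - 1) with hd
  have hdmul : ∀ k ∈ S, d k * (Complex.exp (2 * Real.pi * Complex.I * k * α) - 1) = c k := by
    intro k hk
    have hk0 : k ≠ 0 := Finset.ne_of_mem_erase hk
    rw [hd]
    simp only [if_neg hk0]
    exact div_mul_cancel₀ _ (hEne k hk)
  refine ⟨d, ?_, ?_⟩
  · -- functional equation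
    intro x
    unfold trig
    rw [← Finset.sum_sub_distrib]
    refine Finset.sum_congr rfl fun k hk => ?_
    have hsplit : (2 * (Real.pi:ℂ) * Complex.I * k * ((x + α : ℝ) : ℂ))
        = 2 * Real.pi * Complex.I * k * α + 2 * Real.pi * Complex.I * k * x := by
      push_cast; ring
    rw [hsplit, Complex.exp_add]
    have h := hdmul k hk
    linear_combination Complex.exp (2 * Real.pi * Complex.I * k * x) * h
  · -- norm bound
    intro σ hσ x
    rw [iteratedDeriv_trig]
    unfold trig
    refine le_trans (norm_sum_le _ _) ?_
    set A : ℝ := γ / 4 * (N:ℝ) ^ τ * M with hA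
    have hA0 : 0 ≤ A := by positivity
    have hterm : ∀ k ∈ S, ‖(2 * (Real.pi:ℂ) * Complex.I * k) ^ σ * d k * Complex.exp (2 * Real.pi * Complex.I * k * x)‖
        ≤ (2 * Real.pi * N) ^ σ * A := by
      intro k hk
      have hk0 : k ≠ 0 := Finset.ne_of_mem_erase hk
      have hkN : |(k:ℝ)| ≤ (N:ℝ) := by
        have := Finset.mem_Icc.1 (Finset.mem_of_mem_erase hk)
        rw [abs_le]
        constructor <;> [exact_mod_cast this.1; exact_mod_cast this.2]
      have hkpos : (0:ℝ) < |(k:ℝ)| := by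
        simp only [abs_pos]; exact_mod_cast hk0
      rw [norm_mul, norm_exp_I_real, mul_one, norm_mul, norm_pow]
      have hnc : ‖(2 * (Real.pi:ℂ) * Complex.I * k)‖ = 2 * Real.pi * |(k:ℝ)| := by
        simp [abs_of_nonneg Real.pi_pos.le, Complex.norm_intCast]
      rw [hnc]
      have hdk : ‖d k‖ ≤ A := by
        rw [hd]
        simp only [if_neg hk0]
        rw [norm_div]
        have hdiv : ‖c k‖ / ‖Complex.exp (2 * Real.pi * Complex.I * k * α) - 1‖
            ≤ M / (4 * (γ⁻¹ * |(k:ℝ)| ^ (-τ))) :=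
          div_le_div₀ hM0 (hc k hk) (hEpos k hk) (hE k hk)
        refine hdiv.trans ?_
        rw [Real.rpow_neg (abs_nonneg _)]
        have hkτ : |(k:ℝ)| ^ τ ≤ (N:ℝ) ^ τ := Real.rpow_le_rpow (abs_nonneg _) hkN hτ.le
        have hkτ0 : (0:ℝ) < |(k:ℝ)| ^ τ := Real.rpow_pos_of_pos hkpos τ
        have heq2 : M / (4 * (γ⁻¹ * (|(k:ℝ)| ^ τ)⁻¹)) = γ / 4 * |(k:ℝ)| ^ τ * M := by
          rw [div_eq_iff (by positivity)]
          field_simp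
        rw [heq2, hA]
        gcongr
      have hb : (2 * Real.pi * |(k:ℝ)|) ^ σ ≤ (2 * Real.pi * (N:ℝ)) ^ σ := by
        refine pow_le_pow_left₀ (by positivity) ?_ σ
        nlinarith
      exact mul_le_mul hb hdk (norm_nonneg _) (by positivity)
    refine le_trans (Finset.sum_le_card_nsmul S _ _ hterm) ?_
    have hcard : S.card = 2 * N := by
      rw [hS, Finset.card_erase_of_mem (by
        simp only [Finset.mem_Icc]
        constructor <;> omega), Int.card_Icc]
      omega
    rw [hcard, nsmul_eq_mul]
    push_cast
    -- final arithmetic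
    have h2π1 : (1:ℝ) ≤ 2 * Real.pi := by nlinarith [Real.pi_gt_three]
    have hmono1 : (2 * Real.pi) ^ σ ≤ (2 * Real.pi) ^ s := pow_le_pow_right₀ h2π1 hσ
    have hmono2 : (N:ℝ) ^ σ ≤ (N:ℝ) ^ s := pow_le_pow_right₀ hN1 hσ
    have hrpow : (N:ℝ) ^ ((s:ℝ) + τ + 1) = (N:ℝ) ^ s * (N:ℝ) ^ τ * (N:ℝ) := by
      rw [Real.rpow_add hNpos, Real.rpow_add hNpos, Real.rpow_one, Real.rpow_natCast]
    rw [hrpow, hA, mul_pow]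
    have hnn : (0:ℝ) ≤ (2 * Real.pi) ^ s * γ * ((N:ℝ) ^ s * (N:ℝ) ^ τ * (N:ℝ)) * M := by positivity
    calc 2 * (N:ℝ) * ((2 * Real.pi) ^ σ * (N:ℝ) ^ σ * (γ / 4 * (N:ℝ) ^ τ * M))
        ≤ 2 * (N:ℝ) * ((2 * Real.pi) ^ s * (N:ℝ) ^ s * (γ / 4 * (N:ℝ) ^ τ * M)) := by gcongr
      _ = 1/2 * ((2 * Real.pi) ^ s * γ * ((N:ℝ) ^ s * (N:ℝ) ^ τ * (N:ℝ)) * M) := by ring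
      _ ≤ (2 * Real.pi) ^ s * γ * ((N:ℝ) ^ s * (N:ℝ) ^ τ * (N:ℝ)) * M := by linarith
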